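/- There exist homogeneous polynomials S_k(X,Y) ∈ ℤ[X,Y] of degree p^k for each k ≥ 0, with S_0(X,Y) = X + Y, such that the identity of formal power series AH(X) + AH(Y) = Σ_{k≥0} AH(S_k(X,Y)) holds in ℚ_p[[X,Y]], where AH(X) = Σ_{i≥0} X^{p^i}/p^i. Equivalently, E(X)·E(Y) = ∏_{k≥0} E(S_k(X,Y)) for the Artin–Hasse exponential E. -/

import Mathlib

open MvPolynomial

/-- The coefficient (at the multidegree `d`) of the formal power series
`AH(Q) = ∑_{i≥0} Q^{p^i}/p^i` in `ℚ_p[[X,Y]]`, where `Q ∈ ℚ_p[X,Y]` is a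
polynomial with no constant term (e.g. homogeneous of positive degree), so that
only the finitely many indices `i` with `p^i ≤ |d|` contribute. -/
noncomputable def ahSubstCoeff (p : ℕ) [Fact p.Prime] (Q : MvPolynomial (Fin 2) ℚ_[p])
    (d : Fin 2 →₀ ℕ) : ℚ_[p] :=
  ∑ i ∈ Finset.range ((d.sum fun _ n => n) + 1),
    ((p : ℚ_[p]) ^ i)⁻¹ * MvPolynomial.coeff d (Q ^ p ^ i)

open Finset
section AHaux

lemma tri_sum {M : Type*} [AddCommMonoid M] (N : ℕ) (F : ℕ → ℕ → M)
    (hF : ∀ k i, N < k + i → F k i = 0) :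
    ∑ n ∈ Finset.range (N+1), ∑ k ∈ Finset.range (n+1), F k (n - k) =
      ∑ k ∈ Finset.range (N+1), ∑ i ∈ Finset.range (N+1), F k i := by
  have h1 : ∀ k ∈ Finset.range (N+1),
      (∑ i ∈ Finset.range (N+1), F k i) = ∑ i ∈ Finset.range (N+1-k), F k i := by
    intro k hk
    refine (Finset.sum_subset (Finset.range_subset_range.2 (by omega)) ?_).symm
    intro i hi hni
    simp only [Finset.mem_range] at hi hni hk
    exact hF k i (by omega)
  rw [Finset.sum_congr rfl h1, Finset.sum_sigma', Finset.sum_sigma']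
  refine Finset.sum_nbij' (fun x => ⟨x.2, x.1 - x.2⟩) (fun x => ⟨x.1 + x.2, x.1⟩) ?_ ?_ ?_ ?_ ?_
  · rintro ⟨n, k⟩ hx
    simp only [Finset.mem_sigma, Finset.mem_range] at hx ⊢
    omega
  · rintro ⟨k, i⟩ hx
    simp only [Finset.mem_sigma, Finset.mem_range] at hx ⊢
    omega
  · rintro ⟨n, k⟩ hx
    simp only [Finset.mem_sigma, Finset.mem_range] at hx
    show (⟨k + (n - k), k⟩ : (_ : ℕ) × ℕ) = ⟨n, k⟩
    rw [Nat.add_sub_cancel' (by omega : k ≤ n)]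
  · rintro ⟨k, i⟩ hx
    simp only [Finset.mem_sigma, Finset.mem_range] at hx
    show (⟨k, k + i - k⟩ : (_ : ℕ) × ℕ) = ⟨k, i⟩
    rw [Nat.add_sub_cancel_left]
  · rintro ⟨n, k⟩ hx
    rfl

variable (p : ℕ) [hp : Fact p.Prime]

/-- The specialization `S_k(X,Y) = P_k(X,0,…;Y,0,…)` of the Witt addition polynomials. -/
noncomputable def ahS (k : ℕ) : MvPolynomial (Fin 2) ℤ :=
  aeval (fun bj : Fin 2 × ℕ => if bj.2 = 0 then X bj.1 else 0) (wittStructureInt p (X 0 + X 1) k)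

lemma ahS_ghost (n : ℕ) :
    ∑ i ∈ Finset.range (n+1), C ((p : ℤ)^i) * (ahS p i) ^ (p ^ (n-i)) =
      X 0 ^ p ^ n + X 1 ^ p ^ n := by
  have key := congrArg
    (aeval (fun bj : Fin 2 × ℕ => if bj.2 = 0 then (X bj.1 : MvPolynomial (Fin 2) ℤ) else 0))
    (wittStructureInt_prop p (X 0 + X 1 : MvPolynomial (Fin 2) ℤ) n)
  rw [aeval_bind₁, aeval_bind₁, aeval_wittPolynomial, map_add, aeval_X, aeval_X] at key
  have hb : ∀ b : Fin 2,
      aeval (fun bj : Fin 2 × ℕ => if bj.2 = 0 then (X bj.1 : MvPolynomial (Fin 2) ℤ) else 0)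
        (rename (Prod.mk b) (wittPolynomial p ℤ n)) = X b ^ p ^ n := by
    intro b
    rw [aeval_rename]
    rw [show ((fun bj : Fin 2 × ℕ => if bj.2 = 0 then (X bj.1 : MvPolynomial (Fin 2) ℤ) else 0)
        ∘ Prod.mk b) = fun j : ℕ => if j = 0 then (X b : MvPolynomial (Fin 2) ℤ) else 0 from rfl]
    rw [aeval_wittPolynomial]
    rw [Finset.sum_eq_single 0]
    · simp
    · intro i hi hi0
      rw [if_neg hi0, zero_pow (pow_ne_zero _ hp.1.ne_zero), mul_zero]
    · intro h
      simp at h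
  rw [hb 0, hb 1] at key
  rw [← key]
  refine Finset.sum_congr rfl fun i hi => ?_
  rw [show (C ((p:ℤ)^i) : MvPolynomial (Fin 2) ℤ) = (p : MvPolynomial (Fin 2) ℤ) ^ i by
    simp [map_pow, map_natCast]]
  rw [ahS]

lemma ahS_zero : ahS p 0 = X 0 + X 1 := by
  have := ahS_ghost p 0
  simpa using this

lemma isHomogeneous_of_C_mul {σ R : Type*} [CommRing R] [NoZeroDivisors R] {c : R} (hc : c ≠ 0)
    {φ : MvPolynomial σ R} {n : ℕ} (h : (C c * φ).IsHomogeneous n) : φ.IsHomogeneous n := by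
  intro d hd
  exact h (show coeff d (C c * φ) ≠ 0 by rw [coeff_C_mul]; exact mul_ne_zero hc hd)

lemma ahT_ghost (n : ℕ) :
    ∑ i ∈ Finset.range (n+1),
        C ((p : ℚ_[p])^i) * ((ahS p i).map (Int.castRingHom ℚ_[p])) ^ (p ^ (n-i)) =
      X 0 ^ p ^ n + X 1 ^ p ^ n := by
  have := congrArg (MvPolynomial.map (Int.castRingHom ℚ_[p])) (ahS_ghost p n)
  rw [map_sum] at this
  simp only [map_mul, map_pow, MvPolynomial.map_C, MvPolynomial.map_X, map_add,
    eq_intCast, Int.cast_pow, Int.cast_natCast] at this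
  rw [← this]
  refine Finset.sum_congr rfl fun i _ => ?_
  congr 1
  simp [map_pow, map_natCast]

lemma ahT_homog (k : ℕ) :
    ((ahS p k).map (Int.castRingHom ℚ_[p])).IsHomogeneous (p ^ k) := by
  induction k using Nat.strong_induction_on with
  | _ n ih =>
    have key := ahT_ghost p n
    rw [Finset.sum_range_succ, Nat.sub_self, pow_zero, pow_one] at key
    have heq : C ((p : ℚ_[p])^n) * ((ahS p n).map (Int.castRingHom ℚ_[p])) =
        (X 0 ^ p ^ n + X 1 ^ p ^ n) -
          ∑ i ∈ Finset.range n,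
            C ((p : ℚ_[p])^i) * ((ahS p i).map (Int.castRingHom ℚ_[p])) ^ (p ^ (n-i)) := by
      rw [← key]; ring
    refine isHomogeneous_of_C_mul (pow_ne_zero n (show (p:ℚ_[p]) ≠ 0 by exact_mod_cast hp.1.ne_zero)) ?_
    rw [heq]
    refine ((isHomogeneous_X_pow _ _).add (isHomogeneous_X_pow _ _)).sub
      (IsHomogeneous.sum _ _ _ fun i hi => ?_)
    have hin : i < n := Finset.mem_range.mp hi
    have : p ^ i * p ^ (n - i) = p ^ n := by
      rw [← pow_add]; congr 1; omega
    exact this ▸ ((ih i hin).pow _).C_mul _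

lemma ahS_homog (k : ℕ) : (ahS p k).IsHomogeneous (p ^ k) := by
  intro d hd
  refine ahT_homog p k (d := d) ?_
  rw [coeff_map]
  simpa using hd

theorem stmt_13' :
    ∃ S : ℕ → MvPolynomial (Fin 2) ℤ,
      S 0 = X 0 + X 1 ∧
      (∀ k : ℕ, (S k).IsHomogeneous (p ^ k)) ∧
      ∀ d : Fin 2 →₀ ℕ,
        ahSubstCoeff p (X 0) d + ahSubstCoeff p (X 1) d =
          ∑ k ∈ Finset.range ((d.sum fun _ n => n) + 1),
            ahSubstCoeff p ((S k).map (Int.castRingHom ℚ_[p])) d := by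
  refine ⟨ahS p, ahS_zero p, ahS_homog p, fun d => ?_⟩
  set N := d.sum fun _ n => n with hN
  set T : ℕ → MvPolynomial (Fin 2) ℚ_[p] := fun k => (ahS p k).map (Int.castRingHom ℚ_[p])
    with hT
  set F : ℕ → ℕ → ℚ_[p] := fun k j => ((p : ℚ_[p]) ^ j)⁻¹ * coeff d (T k ^ p ^ j) with hF
  have hp0 : (p : ℚ_[p]) ≠ 0 := by exact_mod_cast hp.1.ne_zero
  have hdeg : d.degree = N := rfl
  have hFzero : ∀ k i, N < k + i → F k i = 0 := by
    intro k i h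
    have h1 : ((T k) ^ p ^ i).IsHomogeneous (p ^ (k + i)) := by
      rw [pow_add]; exact (ahT_homog p k).pow _
    have h2 : d.degree ≠ p ^ (k + i) := by
      have : k + i < p ^ (k + i) := Nat.lt_pow_self hp.1.one_lt
      omega
    simp [hF, h1.coeff_eq_zero h2]
  have hRHS : ∑ k ∈ Finset.range (N + 1), ahSubstCoeff p (T k) d
      = ∑ k ∈ Finset.range (N+1), ∑ i ∈ Finset.range (N+1), F k i := rfl
  have hLHS : ahSubstCoeff p (X 0) d + ahSubstCoeff p (X 1) d =
      ∑ n ∈ Finset.range (N+1), ∑ k ∈ Finset.range (n+1), F k (n - k) := by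
    rw [ahSubstCoeff, ahSubstCoeff, ← Finset.sum_add_distrib]
    refine Finset.sum_congr rfl fun n hn => ?_
    rw [← mul_add, ← coeff_add, ← ahT_ghost p n, coeff_sum, Finset.mul_sum]
    refine Finset.sum_congr rfl fun k hk => ?_
    have hkn : k ≤ n := by simpa using Nat.lt_succ_iff.mp (Finset.mem_range.mp hk)
    rw [coeff_C_mul]
    have hpn : (p : ℚ_[p]) ^ n = p ^ k * p ^ (n - k) := by
      rw [← pow_add]; congr 1; omega
    simp only [hF]
    rw [hpn, mul_inv]
    field_simp
    ring
  rw [hLHS, hRHS, tri_sum N F hFzero]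

end AHaux

/-- There exist homogeneous polynomials `S_k(X,Y) ∈ ℤ[X,Y]` of degree `p^k`,
with `S_0 = X + Y`, such that `AH(X) + AH(Y) = ∑_{k≥0} AH(S_k(X,Y))` holds in
`ℚ_p[[X,Y]]` (coefficientwise; at multidegree `d` only the `k` with
`p^k ≤ |d|` contribute). -/
theorem stmt_13 (p : ℕ) [Fact p.Prime] :
    ∃ S : ℕ → MvPolynomial (Fin 2) ℤ,
      S 0 = X 0 + X 1 ∧
      (∀ k : ℕ, (S k).IsHomogeneous (p ^ k)) ∧
      ∀ d : Fin 2 →₀ ℕ,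
        ahSubstCoeff p (X 0) d + ahSubstCoeff p (X 1) d =
          ∑ k ∈ Finset.range ((d.sum fun _ n => n) + 1),
            ahSubstCoeff p ((S k).map (Int.castRingHom ℚ_[p])) d := by
  exact stmt_13' p
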